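/- If Z is a symmetric matrix, A is Schur stable, Σ ≻ 0 with Lyapunov solution Y (A Y Aᵀ + Σ = Y), and W is symmetric with Z − A Z Aᵀ ⪯ c·Σ for some c ≥ 0, then Z ⪯ c·Y. -/

import Mathlib

open Matrix
open scoped ENNReal
open scoped NNReal
open Filter Topology

/-- Spectral radius of a real square matrix, computed over ℂ. -/
noncomputable def specRad {n : ℕ} (A : Matrix (Fin n) (Fin n) ℝ) : ℝ≥0∞ :=
  spectralRadius ℂ (A.map Complex.ofReal)

/-- A real square matrix is Schur stable if its spectral radius is `< 1`. -/
def IsSchur {n : ℕ} (A : Matrix (Fin n) (Fin n) ℝ) : Prop := specRad A < 1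

lemma aux_pow_tendsto {n : ℕ} {A : Matrix (Fin n) (Fin n) ℝ} (hA : IsSchur A) :
    Tendsto (fun k => A ^ k) atTop (𝓝 0) := by
  letI := Matrix.linftyOpNormedRing (n := Fin n) (α := ℂ)
  letI := Matrix.linftyOpNormedAlgebra (n := Fin n) (R := ℂ) (α := ℂ)
  letI : CompleteSpace (Matrix (Fin n) (Fin n) ℂ) :=
    FiniteDimensional.complete ℂ _
  set B : Matrix (Fin n) (Fin n) ℂ := A.map Complex.ofReal with hBdef
  have hg := spectrum.pow_nnnorm_pow_one_div_tendsto_nhds_spectralRadius B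
  obtain ⟨r, hr1, hr2⟩ := ENNReal.lt_iff_exists_nnreal_btwn.1 hA
  have hev : ∀ᶠ k : ℕ in atTop, (‖B ^ k‖₊ : ℝ≥0∞) ^ (1 / (k : ℝ)) < (r : ℝ≥0∞) :=
    hg.eventually_lt_const hr1
  have hnorm : Tendsto (fun k => ‖B ^ k‖) atTop (𝓝 0) := by
    apply squeeze_zero_norm' (a := fun k => (r : ℝ) ^ k)
    · filter_upwards [hev, eventually_ge_atTop 1] with k hk hk1
      have hk0 : (k : ℝ) ≠ 0 := by positivity
      have h2 : (((‖B ^ k‖₊ : ℝ≥0∞) ^ (1 / (k : ℝ))) ^ (k : ℝ)) < (r : ℝ≥0∞) ^ (k : ℝ) :=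
        ENNReal.rpow_lt_rpow hk (by positivity)
      rw [← ENNReal.rpow_mul, one_div_mul_cancel hk0, ENNReal.rpow_one,
        ENNReal.rpow_natCast, ← ENNReal.coe_pow, ENNReal.coe_lt_coe] at h2
      simpa [norm_norm] using (le_of_lt ((NNReal.coe_lt_coe.2 h2).trans_le (le_refl _)))
    · exact tendsto_pow_atTop_nhds_zero_of_lt_one r.coe_nonneg (by exact_mod_cast hr2)
  have hBpow : ∀ k, B ^ k = (A ^ k).map Complex.ofReal := by
    intro k
    exact (map_pow (Complex.ofRealHom.mapMatrix : Matrix (Fin n) (Fin n) ℝ →+* Matrix (Fin n) (Fin n) ℂ) A k).symm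
  have hentry : ∀ i j, Tendsto (fun k => (A ^ k) i j) atTop (𝓝 0) := by
    intro i j
    apply squeeze_zero_norm (a := fun k => ‖B ^ k‖) _ hnorm
    intro k
    have h1 : ‖(B ^ k) i j‖ ≤ ‖B ^ k‖ := by
      calc ‖(B ^ k) i j‖ ≤ ∑ j', ‖(B ^ k) i j'‖ :=
            Finset.single_le_sum (f := fun j' => ‖(B ^ k) i j'‖) (fun _ _ => norm_nonneg _)
              (Finset.mem_univ j)
        _ ≤ ‖B ^ k‖ := by
            rw [Matrix.linfty_opNorm_def]
            calc (∑ j', ‖(B ^ k) i j'‖) = ((∑ j', ‖(B ^ k) i j'‖₊ : ℝ≥0) : ℝ) := by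
                  push_cast; rfl
              _ ≤ _ := by
                  exact_mod_cast Finset.le_sup (f := fun i => ∑ j', ‖(B ^ k) i j'‖₊)
                    (Finset.mem_univ i)
    have h2 : ‖(B ^ k) i j‖ = ‖(A ^ k) i j‖ := by
      rw [hBpow k]; simp [Matrix.map_apply, Complex.norm_real]
    rw [← h2]; exact h1
  exact tendsto_pi_nhds.2 fun i => tendsto_pi_nhds.2 fun j => hentry i j

/-- Comparison lemma: if `A` is Schur, `Y` solves `AYAᵀ + Σ = Y` with `Σ ≻ 0`,
`Z` is symmetric, `c ≥ 0`, and `Z − AZAᵀ ⪯ c·Σ`, then `Z ⪯ c·Y`. -/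
theorem stmt18 {n : ℕ} (A Sig Y Z : Matrix (Fin n) (Fin n) ℝ) (c : ℝ)
    (hA : IsSchur A) (hSig : Sig.PosDef)
    (hY : A * Y * Aᵀ + Sig = Y)
    (hZ : Zᵀ = Z) (hc : 0 ≤ c)
    (h : (c • Sig - (Z - A * Z * Aᵀ)).PosSemidef) :
    (c • Y - Z).PosSemidef := by
  have hpow := aux_pow_tendsto hA
  have hSigT : Sigᵀ = Sig := by
    have h1 := hSig.isHermitian
    rwa [Matrix.IsHermitian, conjTranspose_eq_transpose_of_trivial] at h1
  -- Y is symmetric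
  have hYT : Yᵀ = Y := by
    have h1 := congrArg Matrix.transpose hY
    simp only [Matrix.transpose_add, Matrix.transpose_mul, Matrix.transpose_transpose,
      hSigT, ← Matrix.mul_assoc] at h1
    -- h1 : A * Yᵀ * Aᵀ + Sig = Yᵀ
    set D := Y - Yᵀ with hDdef
    have hD : D = A * D * Aᵀ := by
      calc D = (A * Y * Aᵀ + Sig) - (A * Yᵀ * Aᵀ + Sig) := by rw [hY, h1]
        _ = A * D * Aᵀ := by
            rw [hDdef, Matrix.mul_sub, Matrix.sub_mul]
            abel
    have hDk : ∀ k, D = A ^ k * D * (A ^ k)ᵀ := by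
      intro k
      induction k with
      | zero => simp
      | succ k ih =>
          conv_lhs => rw [hD, ih]
          rw [pow_succ']
          simp only [Matrix.transpose_mul, Matrix.mul_assoc]
    have hcont : Continuous fun N : Matrix (Fin n) (Fin n) ℝ => N * D * Nᵀ :=
      (continuous_id.matrix_mul continuous_const).matrix_mul continuous_id.matrix_transpose
    have h2 : Tendsto (fun k => A ^ k * D * (A ^ k)ᵀ) atTop (𝓝 ((0 : Matrix (Fin n) (Fin n) ℝ) * D * (0 : Matrix (Fin n) (Fin n) ℝ)ᵀ)) :=
      (hcont.tendsto 0).comp hpow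
    have h3 : Tendsto (fun _ : ℕ => D) atTop (𝓝 0) := by
      have : (fun k => A ^ k * D * (A ^ k)ᵀ) = fun _ : ℕ => D := by
        funext k; exact (hDk k).symm
      rw [this] at h2
      simpa using h2
    have hD0 : D = 0 := tendsto_nhds_unique tendsto_const_nhds h3
    rw [hDdef] at hD0
    exact (sub_eq_zero.1 hD0).symm
  set M := c • Y - Z with hMdef
  have hM : M = A * M * Aᵀ + (c • Sig - (Z - A * Z * Aᵀ)) := by
    rw [hMdef]
    conv_lhs => rw [← hY]
    simp only [Matrix.mul_sub, Matrix.sub_mul, Matrix.mul_smul, Matrix.smul_mul, smul_add,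
      Matrix.mul_assoc]
    abel
  have hP : (c • Sig - (Z - A * Z * Aᵀ)) = M - A * M * Aᵀ := eq_sub_of_add_eq' hM.symm
  have hAT : Aᴴ = Aᵀ := conjTranspose_eq_transpose_of_trivial A
  have hstep : ∀ k, (M - A ^ k * M * (A ^ k)ᵀ).PosSemidef := by
    intro k
    induction k with
    | zero => simpa using (Matrix.PosSemidef.zero (n := Fin n) (R := ℝ))
    | succ k ih =>
        have heq : M - A ^ (k + 1) * M * (A ^ (k + 1))ᵀ
            = (M - A * M * Aᵀ) + A * (M - A ^ k * M * (A ^ k)ᵀ) * Aᵀ := by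
          rw [pow_succ']
          simp only [Matrix.transpose_mul, Matrix.mul_sub, Matrix.sub_mul, Matrix.mul_assoc]
          abel
        rw [heq, ← hP]
        exact h.add (by simpa [hAT] using ih.mul_mul_conjTranspose_same A)
  have hMh : M.IsHermitian := by
    rw [Matrix.IsHermitian, conjTranspose_eq_transpose_of_trivial, hMdef, transpose_sub,
      transpose_smul, hYT, hZ]
  refine .of_dotProduct_mulVec_nonneg hMh fun x => ?_
  have hcont : Continuous fun N : Matrix (Fin n) (Fin n) ℝ =>
      star x ⬝ᵥ ((N * M * Nᵀ) *ᵥ x) :=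
    continuous_const.dotProduct
      ((((continuous_id.matrix_mul continuous_const).matrix_mul
        continuous_id.matrix_transpose).matrix_mulVec continuous_const))
  have htend : Tendsto (fun k => star x ⬝ᵥ ((A ^ k * M * (A ^ k)ᵀ) *ᵥ x)) atTop (𝓝 0) := by
    have h2 := (hcont.tendsto 0).comp hpow
    simpa only [Function.comp_def, Matrix.zero_mul, Matrix.transpose_zero, Matrix.mul_zero,
      Matrix.zero_mulVec, dotProduct_zero] using h2
  have hle : ∀ k, star x ⬝ᵥ ((A ^ k * M * (A ^ k)ᵀ) *ᵥ x) ≤ star x ⬝ᵥ (M *ᵥ x) := by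
    intro k
    have h3 := (hstep k).dotProduct_mulVec_nonneg x
    rw [Matrix.sub_mulVec, dotProduct_sub] at h3
    linarith
  exact le_of_tendsto' htend hle
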